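/- Let μ be a Borel probability measure on [0,1) with a Lebesgue density f₀ satisfying f₀ ≤ F pointwise for some F > 0. Then for every M > (1/3)(sqrt(log 2) * sqrt(18F + log 2) + log 2) there exists C > 0 depending only on F and M such that the following holds: for every n ≥ 1, every L ∈ ℕ, and every family X₁,…,Xₙ of independent random variables each with law μ, the probability that there exist l ∈ ℕ and 0 ≤ k < 2^l with |#{i : Xᵢ ∈ I_{l,k}} − n μ(I_{l,k})| > M * max( sqrt(n(l+L) 2^{−l}), l + L ) is at most C * 2^{−L}. -/

import Mathlib

open MeasureTheory ProbabilityTheory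

open scoped Classical

/-- The dyadic interval `I_{l,k} = [k 2^{-l}, (k+1) 2^{-l})`. -/
def dyadicI (l k : ℕ) : Set ℝ := Set.Ico ((k : ℝ) / 2 ^ l) (((k : ℝ) + 1) / 2 ^ l)

/- ### Auxiliary analytic inequalities -/

lemma aux_h_nonneg : ∀ s : ℝ, 0 ≤ s → 0 ≤ s + 2 + (s - 2) * Real.exp s := by
  have hd : ∀ s : ℝ, HasDerivAt (fun s => s + 2 + (s - 2) * Real.exp s)
      (1 + (1 * Real.exp s + (s - 2) * Real.exp s)) s := fun s => by
    exact ((hasDerivAt_id s).add_const 2).add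
      (((hasDerivAt_id s).sub_const 2).mul (Real.hasDerivAt_exp s))
  have hmono : Monotone (fun s => s + 2 + (s - 2) * Real.exp s) := by
    apply monotone_of_deriv_nonneg
    · exact fun s => (hd s).differentiableAt
    · intro s
      rw [(hd s).deriv]
      have h1 : (1 - s) * Real.exp s ≤ 1 := by
        have := Real.add_one_le_exp (-s)
        calc (1 - s) * Real.exp s ≤ Real.exp (-s) * Real.exp s := by
              apply mul_le_mul_of_nonneg_right _ (Real.exp_pos s).le
              linarith
          _ = 1 := by rw [← Real.exp_add]; simp
      nlinarith [Real.exp_pos s]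
  intro s hs
  have := hmono hs
  simpa using this

lemma aux_key_ineq : ∀ s : ℝ, 0 ≤ s → (1 - s / 3) * (Real.exp s - 1 - s) ≤ s ^ 2 / 2 := by
  have hd : ∀ s : ℝ, HasDerivAt (fun s => s ^ 2 / 2 - (1 - s / 3) * (Real.exp s - 1 - s))
      (s - ((-(1/3)) * (Real.exp s - 1 - s) + (1 - s / 3) * (Real.exp s - 1))) s := fun s => by
    have h1 : HasDerivAt (fun s : ℝ => s ^ 2 / 2) s s := by
      simpa using ((hasDerivAt_pow 2 s).div_const 2)
    have h2 : HasDerivAt (fun s : ℝ => (1 - s / 3)) (-(1/3)) s := by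
      simpa using ((hasDerivAt_id s).div_const 3).const_sub 1
    have h3 : HasDerivAt (fun s : ℝ => Real.exp s - 1 - s) (Real.exp s - 1) s := by
      simpa using ((Real.hasDerivAt_exp s).sub_const 1).fun_sub (hasDerivAt_id s)
    exact h1.sub (h2.mul h3)
  have hmono : MonotoneOn (fun s => s ^ 2 / 2 - (1 - s / 3) * (Real.exp s - 1 - s))
      (Set.Ici 0) := by
    apply monotoneOn_of_deriv_nonneg (convex_Ici 0)
    · exact (Continuous.continuousOn (by continuity))
    · intro s _
      exact (hd s).differentiableAt.differentiableWithinAt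
    · intro s hs
      rw [interior_Ici] at hs
      rw [(hd s).deriv]
      have := aux_h_nonneg s (le_of_lt hs)
      nlinarith [Real.exp_pos s]
  intro s hs
  have := hmono (Set.self_mem_Ici) hs hs
  simp only [Real.exp_zero] at this
  nlinarith [this]

lemma aux_key_ineq_neg : ∀ s : ℝ, 0 ≤ s → Real.exp (-s) - 1 + s ≤ s ^ 2 / 2 := by
  have hd : ∀ s : ℝ, HasDerivAt (fun s => s ^ 2 / 2 + 1 - s - Real.exp (-s))
      (s - 1 - (-Real.exp (-s))) s := fun s => by
    have h1 : HasDerivAt (fun s : ℝ => s ^ 2 / 2 + 1 - s) (s - 1) s := by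
      simpa using (((hasDerivAt_pow 2 s).div_const 2).add_const 1).fun_sub (hasDerivAt_id s)
    have h2 : HasDerivAt (fun s : ℝ => Real.exp (-s)) (-Real.exp (-s)) s := by
      simpa [Function.comp_def] using (Real.hasDerivAt_exp (-s)).comp s ((hasDerivAt_id s).neg)
    exact h1.sub h2
  have hmono : Monotone (fun s => s ^ 2 / 2 + 1 - s - Real.exp (-s)) := by
    apply monotone_of_deriv_nonneg
    · exact fun s => (hd s).differentiableAt
    · intro s
      rw [(hd s).deriv]
      have := Real.add_one_le_exp (-s)
      linarith
  intro s hs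
  have := hmono hs
  simp only [neg_zero, Real.exp_zero] at this
  nlinarith [this]

/- ### Indicator function and single-variable mgf bound -/

noncomputable def indF (I : Set ℝ) : ℝ → ℝ := Set.indicator I (fun _ => (1:ℝ))

lemma indF_meas {I : Set ℝ} (hI : MeasurableSet I) : Measurable (indF I) :=
  (measurable_const.indicator hI)

lemma mgf_indF_le {Ω : Type} [MeasurableSpace Ω] {P : Measure Ω}
    {μ : Measure ℝ} [IsProbabilityMeasure μ]
    {I : Set ℝ} (hI : MeasurableSet I) {X : Ω → ℝ} (hX : Measurable X)
    (hmap : Measure.map X P = μ) (u : ℝ) :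
    mgf (fun ω => indF I (X ω) - (μ I).toReal) P u
      ≤ Real.exp ((μ I).toReal * (Real.exp u - 1 - u)) := by
  set p : ℝ := (μ I).toReal with hp
  have hp0 : 0 ≤ p := ENNReal.toReal_nonneg
  have hp1 : p ≤ 1 := by
    rw [hp]
    exact ENNReal.toReal_le_of_le_ofReal one_pos.le (by simpa using prob_le_one)
  have hmeas : Measurable (fun x : ℝ => Real.exp (u * (indF I x - p))) :=
    ((((indF_meas hI).sub measurable_const).const_mul u).exp)
  have h1 : mgf (fun ω => indF I (X ω) - p) P u
      = ∫ x, Real.exp (u * (indF I x - p)) ∂μ := by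
    rw [mgf, ← hmap, integral_map hX.aemeasurable hmeas.aestronglyMeasurable]
  set e0 : ℝ := Real.exp (u * (0 - p)) with he0
  set e1 : ℝ := Real.exp (u * (1 - p)) with he1
  have hfun : (fun x : ℝ => Real.exp (u * (indF I x - p)))
      = fun x => Set.indicator I (fun _ => e1 - e0) x + e0 := by
    funext x
    by_cases hx : x ∈ I
    · simp [indF, Set.indicator_of_mem hx, he1]
    · simp only [indF, Set.indicator_of_notMem hx, he0]
      ring_nf
  have h2 : ∫ x, Real.exp (u * (indF I x - p)) ∂μ = (e1 - e0) * p + e0 := by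
    rw [hfun, integral_add ((integrable_const (e1 - e0)).indicator hI) (integrable_const e0),
      integral_indicator_const _ hI, integral_const]
    simp [hp, smul_eq_mul, mul_comm, measureReal_def]
  have he1e0 : e1 = e0 * Real.exp u := by
    rw [he0, he1, ← Real.exp_add]; ring_nf
  have h3 : (e1 - e0) * p + e0 = e0 * (1 + p * (Real.exp u - 1)) := by
    rw [he1e0]; ring
  have h4 : e0 * (1 + p * (Real.exp u - 1)) ≤ e0 * Real.exp (p * (Real.exp u - 1)) := by
    apply mul_le_mul_of_nonneg_left _ (Real.exp_pos _).le
    have := Real.add_one_le_exp (p * (Real.exp u - 1))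
    linarith
  have h5 : e0 * Real.exp (p * (Real.exp u - 1)) = Real.exp (p * (Real.exp u - 1 - u)) := by
    rw [he0, ← Real.exp_add]; ring_nf
  rw [h1, h2, h3]
  rw [← h5]
  exact h4

/- ### Bernstein-type tail bound for the centered indicator sum -/

section BernsteinTail

variable {Ω : Type} [MeasurableSpace Ω] {P : Measure Ω} [IsProbabilityMeasure P]
  {μ : Measure ℝ} [IsProbabilityMeasure μ]
  {n : ℕ} {X : Fin n → Ω → ℝ} {I : Set ℝ}

set_option linter.unusedSectionVars false

lemma mgf_sum_le (hXm : ∀ i, Measurable (X i))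
    (hind : iIndepFun X P)
    (hmap : ∀ i, Measure.map (X i) P = μ) (hI : MeasurableSet I) (u : ℝ) :
    mgf (∑ i : Fin n, fun ω => indF I (X i ω) - (μ I).toReal) P u
      ≤ Real.exp ((n : ℝ) * (μ I).toReal * (Real.exp u - 1 - u)) := by
  set p : ℝ := (μ I).toReal with hp
  have hYm : ∀ i, Measurable (fun ω => indF I (X i ω) - p) :=
    fun i => ((indF_meas hI).comp (hXm i)).sub measurable_const
  have hYind : iIndepFun
      (fun i => fun ω => indF I (X i ω) - p) P := by
    have := hind.comp (fun _ => fun x : ℝ => indF I x - p)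
      (fun _ => (indF_meas hI).sub measurable_const)
    exact this
  rw [hYind.mgf_sum hYm Finset.univ]
  calc ∏ i : Fin n, mgf (fun ω => indF I (X i ω) - p) P u
      ≤ ∏ _i : Fin n, Real.exp (p * (Real.exp u - 1 - u)) := by
        apply Finset.prod_le_prod (fun i _ => mgf_nonneg)
        exact fun i _ => mgf_indF_le hI (hXm i) (hmap i) u
    _ = Real.exp ((n : ℝ) * p * (Real.exp u - 1 - u)) := by
        rw [Finset.prod_const, Finset.card_univ, Fintype.card_fin, ← Real.exp_nat_mul]
        ring_nf

lemma integrable_exp_sum (hXm : ∀ i, Measurable (X i)) (hI : MeasurableSet I) (u : ℝ) :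
    Integrable (fun ω => Real.exp (u * (∑ i : Fin n, (indF I (X i ω) - (μ I).toReal)))) P := by
  set p : ℝ := (μ I).toReal with hp
  have hp0 : 0 ≤ p := ENNReal.toReal_nonneg
  have hp1 : p ≤ 1 := ENNReal.toReal_le_of_le_ofReal one_pos.le (by simpa using prob_le_one)
  have hZm : Measurable (fun ω => ∑ i : Fin n, (indF I (X i ω) - p)) := by
    apply Finset.measurable_sum
    exact fun i _ => ((indF_meas hI).comp (hXm i)).sub measurable_const
  refine ⟨((hZm.const_mul u).exp).aestronglyMeasurable, ?_⟩
  apply MeasureTheory.HasFiniteIntegral.of_bounded (C := Real.exp (|u| * n))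
  apply Filter.Eventually.of_forall
  intro ω
  rw [Real.norm_eq_abs, abs_of_pos (Real.exp_pos _), Real.exp_le_exp]
  have hZb : |∑ i : Fin n, (indF I (X i ω) - p)| ≤ (n : ℝ) := by
    calc |∑ i : Fin n, (indF I (X i ω) - p)| ≤ ∑ i : Fin n, |indF I (X i ω) - p| :=
        Finset.abs_sum_le_sum_abs _ _
      _ ≤ ∑ _i : Fin n, (1 : ℝ) := by
          apply Finset.sum_le_sum
          intro i _
          rw [abs_le]
          by_cases hx : X i ω ∈ I
          · simp only [indF, Set.indicator_of_mem hx]; constructor <;> linarith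
          · simp only [indF, Set.indicator_of_notMem hx]; constructor <;> linarith
      _ = n := by simp
  calc u * (∑ i : Fin n, (indF I (X i ω) - p)) ≤ |u * (∑ i : Fin n, (indF I (X i ω) - p))| :=
      le_abs_self _
    _ = |u| * |∑ i : Fin n, (indF I (X i ω) - p)| := abs_mul _ _
    _ ≤ |u| * n := by apply mul_le_mul_of_nonneg_left hZb (abs_nonneg u)

set_option maxHeartbeats 1000000 in
lemma bernstein_tail (hXm : ∀ i, Measurable (X i))
    (hind : iIndepFun X P)
    (hmap : ∀ i, Measure.map (X i) P = μ) (hI : MeasurableSet I)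
    {V t : ℝ} (hV : (n : ℝ) * (μ I).toReal ≤ V) (hV0 : 0 < V) (ht : 0 < t) :
    P {ω | t < |∑ i : Fin n, (indF I (X i ω) - (μ I).toReal)|}
      ≤ ENNReal.ofReal (2 * Real.exp (-(t ^ 2 / (2 * (V + t / 3))))) := by
  set p : ℝ := (μ I).toReal with hp
  have hnp0 : 0 ≤ (n : ℝ) * p := by positivity
  set Z : Ω → ℝ := fun ω => ∑ i : Fin n, (indF I (X i ω) - p) with hZ
  set D : ℝ := V + t / 3 with hD
  have hD0 : 0 < D := by positivity
  set s : ℝ := t / D with hs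
  have hs0 : 0 ≤ s := by positivity
  have h13 : 1 - s / 3 = V / D := by
    rw [hs, hD]
    field_simp
    ring
  have hs3 : 0 < 1 - s / 3 := by rw [h13]; positivity
  set B : ℝ := Real.exp (-(t ^ 2 / (2 * D))) with hB
  have hquad : -s * t + V * (s ^ 2 / (2 * (1 - s / 3))) = -(t ^ 2 / (2 * D)) := by
    rw [h13, hs]
    field_simp
    ring
  have hmgfZ : ∀ u : ℝ, mgf Z P u ≤ Real.exp ((n : ℝ) * p * (Real.exp u - 1 - u)) := by
    intro u
    have : Z = ∑ i : Fin n, fun ω => indF I (X i ω) - p := by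
      funext ω; rw [Finset.sum_apply]
    rw [this]
    exact mgf_sum_le hXm hind hmap hI u
  have hup : (P {ω | t ≤ Z ω}).toReal ≤ B := by
    have hint : Integrable (fun ω => Real.exp (s * Z ω)) P := integrable_exp_sum hXm hI s
    calc (P {ω | t ≤ Z ω}).toReal ≤ Real.exp (-s * t) * mgf Z P s :=
        measure_ge_le_exp_mul_mgf t hs0 hint
      _ ≤ Real.exp (-s * t) * Real.exp ((n : ℝ) * p * (Real.exp s - 1 - s)) :=
        mul_le_mul_of_nonneg_left (hmgfZ s) (Real.exp_pos _).le
      _ ≤ B := by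
        rw [← Real.exp_add, hB, Real.exp_le_exp, ← hquad]
        have hphi0 : 0 ≤ Real.exp s - 1 - s := by
          have := Real.add_one_le_exp s; linarith
        have h1 : (n : ℝ) * p * (Real.exp s - 1 - s) ≤ V * (Real.exp s - 1 - s) :=
          mul_le_mul_of_nonneg_right hV hphi0
        have h2 : Real.exp s - 1 - s ≤ s ^ 2 / (2 * (1 - s / 3)) := by
          rw [le_div_iff₀ (by positivity)]
          have := aux_key_ineq s hs0
          nlinarith
        have h3 : V * (Real.exp s - 1 - s) ≤ V * (s ^ 2 / (2 * (1 - s / 3))) :=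
          mul_le_mul_of_nonneg_left h2 hV0.le
        linarith
  have hlo : (P {ω | t ≤ -Z ω}).toReal ≤ B := by
    have hint : Integrable (fun ω => Real.exp (s * (-Z) ω)) P := by
      have h0 := integrable_exp_sum (P := P) (μ := μ) (X := X) (I := I) hXm hI (-s)
      have heq : (fun ω => Real.exp (s * (-Z) ω))
          = fun ω => Real.exp (-s * (∑ i : Fin n, (indF I (X i ω) - p))) := by
        funext ω
        congr 1
        simp only [Pi.neg_apply, hZ]
        ring
      rw [heq]
      exact h0
    calc (P {ω | t ≤ (-Z) ω}).toReal ≤ Real.exp (-s * t) * mgf (-Z) P s :=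
        measure_ge_le_exp_mul_mgf t hs0 hint
      _ = Real.exp (-s * t) * mgf Z P (-s) := by rw [mgf_neg]
      _ ≤ Real.exp (-s * t) * Real.exp ((n : ℝ) * p * (Real.exp (-s) - 1 - (-s))) :=
        mul_le_mul_of_nonneg_left (hmgfZ (-s)) (Real.exp_pos _).le
      _ ≤ B := by
        rw [← Real.exp_add, hB, Real.exp_le_exp, ← hquad]
        have hphi0 : 0 ≤ Real.exp (-s) - 1 - (-s) := by
          have := Real.add_one_le_exp (-s); linarith
        have h1 : (n : ℝ) * p * (Real.exp (-s) - 1 - (-s)) ≤ V * (Real.exp (-s) - 1 - (-s)) :=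
          mul_le_mul_of_nonneg_right hV hphi0
        have h2 : Real.exp (-s) - 1 - (-s) ≤ s ^ 2 / (2 * (1 - s / 3)) := by
          have hk := aux_key_ineq_neg s hs0
          have : s ^ 2 / 2 ≤ s ^ 2 / (2 * (1 - s / 3)) := by
            apply div_le_div_of_nonneg_left (by positivity) (by positivity)
            nlinarith
          linarith
        have h3 : V * (Real.exp (-s) - 1 - (-s)) ≤ V * (s ^ 2 / (2 * (1 - s / 3))) :=
          mul_le_mul_of_nonneg_left h2 hV0.le
        linarith
  have hsub : {ω | t < |Z ω|} ⊆ {ω | t ≤ Z ω} ∪ {ω | t ≤ -Z ω} := by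
    intro ω hω
    simp only [Set.mem_setOf_eq, lt_abs] at hω
    rcases hω with h | h
    · exact Or.inl (le_of_lt h)
    · exact Or.inr (le_of_lt h)
  calc P {ω | t < |Z ω|} ≤ P ({ω | t ≤ Z ω} ∪ {ω | t ≤ -Z ω}) := measure_mono hsub
    _ ≤ P {ω | t ≤ Z ω} + P {ω | t ≤ -Z ω} := measure_union_le _ _
    _ ≤ ENNReal.ofReal B + ENNReal.ofReal B := by
      gcongr
      · exact (ENNReal.le_ofReal_iff_toReal_le (measure_ne_top P _) (Real.exp_pos _).le).mpr hup
      · exact (ENNReal.le_ofReal_iff_toReal_le (measure_ne_top P _) (Real.exp_pos _).le).mpr hlo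
    _ = ENNReal.ofReal (2 * B) := by
      rw [← ENNReal.ofReal_add (Real.exp_pos _).le (Real.exp_pos _).le]
      congr 1
      ring

end BernsteinTail

/- ### Remaining arithmetic lemmas -/

lemma dyadic_meas (l k : ℕ) : MeasurableSet (dyadicI l k) := measurableSet_Ico

lemma meas_dyadic_le {μ : Measure ℝ} [IsProbabilityMeasure μ] {f₀ : ℝ → ℝ} {F : ℝ} (hF : 0 < F)
    (hdens : μ = volume.withDensity fun x => ENNReal.ofReal (f₀ x))
    (hbound : ∀ x, f₀ x ≤ F) (l k : ℕ) :
    (μ (dyadicI l k)).toReal ≤ F * ((2 : ℝ) ^ l)⁻¹ := by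
  have hq : (0:ℝ) < ((2 : ℝ) ^ l)⁻¹ := by positivity
  apply ENNReal.toReal_le_of_le_ofReal (by positivity)
  have h1 : μ (dyadicI l k) = ∫⁻ x in dyadicI l k, ENNReal.ofReal (f₀ x) := by
    rw [hdens, withDensity_apply _ (dyadic_meas l k)]
  rw [h1]
  calc ∫⁻ x in dyadicI l k, ENNReal.ofReal (f₀ x)
      ≤ ∫⁻ _x in dyadicI l k, ENNReal.ofReal F :=
        lintegral_mono fun x => ENNReal.ofReal_le_ofReal (hbound x)
    _ = ENNReal.ofReal F * volume (dyadicI l k) := setLIntegral_const _ _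
    _ = ENNReal.ofReal F * ENNReal.ofReal (((2:ℝ) ^ l)⁻¹) := by
        rw [dyadicI, Real.volume_Ico]
        congr 1
        rw [div_sub_div_same]
        norm_num
    _ = ENNReal.ofReal (F * ((2:ℝ) ^ l)⁻¹) := (ENNReal.ofReal_mul hF.le).symm

lemma root_arith {F M : ℝ} (hF : 0 < F)
    (hM : (1 / 3) * (Real.sqrt (Real.log 2) * Real.sqrt (18 * F + Real.log 2) + Real.log 2) < M) :
    0 < M ∧ Real.log 2 < M ^ 2 / (2 * (F + M / 3)) := by
  have hl2 : (0:ℝ) < Real.log 2 := Real.log_pos (by norm_num)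
  set b : ℝ := Real.log 2 / 3 with hb
  set c : ℝ := 2 * F * Real.log 2 with hc
  have hbc : 0 ≤ b ^ 2 + c := by positivity
  have hsqrt_eq : (1/3) * (Real.sqrt (Real.log 2) * Real.sqrt (18 * F + Real.log 2))
      = Real.sqrt (b ^ 2 + c) := by
    rw [← Real.sqrt_mul hl2.le]
    have h9 : Real.sqrt 9 = 3 := by
      rw [show (9:ℝ) = 3 ^ 2 by norm_num, Real.sqrt_sq (by norm_num)]
    rw [show (1/3 : ℝ) * Real.sqrt (Real.log 2 * (18 * F + Real.log 2))
        = Real.sqrt (Real.log 2 * (18 * F + Real.log 2)) / Real.sqrt 9 by rw [h9]; ring,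
      ← Real.sqrt_div (by positivity)]
    congr 1
    rw [hb, hc]
    ring
  have hM' : b + Real.sqrt (b ^ 2 + c) < M := by
    rw [← hsqrt_eq]
    calc b + (1/3) * (Real.sqrt (Real.log 2) * Real.sqrt (18 * F + Real.log 2))
        = (1 / 3) * (Real.sqrt (Real.log 2) * Real.sqrt (18 * F + Real.log 2) + Real.log 2) := by
          rw [hb]; ring
      _ < M := hM
  have hb0 : 0 < b := by positivity
  have hM0 : 0 < M := lt_trans (by positivity) hM'
  have hMb : 0 < M - b := by
    have := Real.sqrt_nonneg (b ^ 2 + c)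
    linarith
  have hlt : b ^ 2 + c < (M - b) ^ 2 := by
    rw [← Real.sqrt_lt' hMb]
    linarith
  refine ⟨hM0, ?_⟩
  rw [lt_div_iff₀ (by positivity)]
  rw [hb, hc] at hlt
  nlinarith

lemma expo_arith {F M nn a q : ℝ} (hF : 0 < F) (hM : 0 < M)
    (hn : 1 ≤ nn) (ha : 1 ≤ a) (hq : 0 < q)
    {t : ℝ} (ht : t = M * max (Real.sqrt (nn * a * q)) a) :
    M ^ 2 / (2 * (F + M / 3)) * a ≤ t ^ 2 / (2 * (nn * F * q + t / 3)) := by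
  set m : ℝ := max (Real.sqrt (nn * a * q)) a with hm
  have ha0 : 0 < a := by linarith
  have hma : a ≤ m := le_max_right _ _
  have hm0 : 0 < m := lt_of_lt_of_le ha0 hma
  have hm2 : nn * a * q ≤ m ^ 2 := by
    have h1 : Real.sqrt (nn * a * q) ≤ m := le_max_left _ _
    have h2 : (0:ℝ) ≤ nn * a * q := by positivity
    calc nn * a * q = Real.sqrt (nn * a * q) ^ 2 := (Real.sq_sqrt h2).symm
      _ ≤ m ^ 2 := by nlinarith [Real.sqrt_nonneg (nn * a * q)]
  set Y : ℝ := (F + M / 3) * m ^ 2 / a with hY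
  have hVle : nn * F * q + t / 3 ≤ Y := by
    have h1 : nn * F * q ≤ F * m ^ 2 / a := by
      rw [le_div_iff₀ ha0]
      nlinarith
    have h2 : t / 3 ≤ M * m ^ 2 / (3 * a) := by
      rw [ht, div_le_div_iff₀ (by norm_num) (by positivity)]
      have hmm : m * a ≤ m * m := mul_le_mul_of_nonneg_left hma hm0.le
      nlinarith
    have h3 : (F + M / 3) * m ^ 2 / a = F * m ^ 2 / a + M * m ^ 2 / (3 * a) := by
      field_simp
    rw [hY, h3]
    linarith
  have hX0 : 0 < nn * F * q + t / 3 := by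
    have htt : 0 < t := by rw [ht]; positivity
    positivity
  have heq : M ^ 2 / (2 * (F + M / 3)) * a = t ^ 2 / (2 * Y) := by
    rw [ht, hY, eq_div_iff (by positivity)]
    field_simp
  rw [heq]
  exact div_le_div_of_nonneg_left (by positivity) (by positivity) (by linarith)

lemma count_eq {Ω : Type} {n : ℕ} (X : Fin n → Ω → ℝ) (I : Set ℝ) (p : ℝ) (ω : Ω) :
    ((Finset.univ.filter fun i => X i ω ∈ I).card : ℝ) - (n : ℝ) * p
      = ∑ i : Fin n, (indF I (X i ω) - p) := by
  rw [Finset.sum_sub_distrib, Finset.sum_const, Finset.card_univ, Fintype.card_fin]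
  congr 1
  · rw [Finset.card_filter]
    push_cast
    apply Finset.sum_congr rfl
    intro i _
    simp [indF, Set.indicator_apply]
  · simp [nsmul_eq_mul]
set_option maxHeartbeats 1000000 in
/-- Let `μ` be a Borel probability measure on `[0,1)` with Lebesgue density
`f₀ ≤ F` for some `F > 0`. For every `M > (1/3)(√(log 2) √(18F + log 2) + log 2)` there is
`C > 0` (depending only on `F, M`) such that for every `n ≥ 1`, `L ∈ ℕ`, and i.i.d. sample
`X₁, …, Xₙ ~ μ`, the probability that for some dyadic interval `I_{l,k}` the count deviation
`|#{i : Xᵢ ∈ I_{l,k}} − n μ(I_{l,k})|` exceeds `M max(√(n(l+L)2^{-l}), l+L)` is at most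
`C 2^{-L}`. -/
theorem stmt_9 (μ : Measure ℝ) [IsProbabilityMeasure μ]
    (f₀ : ℝ → ℝ) (F : ℝ) (hF : 0 < F)
    (hdens : μ = volume.withDensity fun x => ENNReal.ofReal (f₀ x))
    (hsupp : μ (Set.Ico (0 : ℝ) 1)ᶜ = 0)
    (hbound : ∀ x, f₀ x ≤ F) :
    ∀ M : ℝ,
      (1 / 3) * (Real.sqrt (Real.log 2) * Real.sqrt (18 * F + Real.log 2) + Real.log 2) < M →
      ∃ C > 0, ∀ n : ℕ, 1 ≤ n → ∀ L : ℕ,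
        ∀ (Ω : Type) (_ : MeasurableSpace Ω) (P : Measure Ω), IsProbabilityMeasure P →
          ∀ X : Fin n → Ω → ℝ, (∀ i, Measurable (X i)) →
            iIndepFun X P →
            (∀ i, Measure.map (X i) P = μ) →
            P {ω | ∃ l k : ℕ, k < 2 ^ l ∧
                M * max (Real.sqrt ((n : ℝ) * ((l : ℝ) + L) / 2 ^ l)) ((l : ℝ) + L) <
                  |((Finset.univ.filter fun i => X i ω ∈ dyadicI l k).card : ℝ) -
                    (n : ℝ) * (μ (dyadicI l k)).toReal|}
              ≤ ENNReal.ofReal (C * 2 ^ (-(L : ℝ))) := by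
  intro M hM
  obtain ⟨hM0, hβ⟩ := root_arith hF hM
  set β : ℝ := M ^ 2 / (2 * (F + M / 3)) with hβdef
  set r : ℝ := 2 * Real.exp (-β) with hrdef
  have hr0 : 0 < r := by positivity
  have hl2 : (0:ℝ) < Real.log 2 := Real.log_pos (by norm_num)
  have hr1 : r < 1 := by
    rw [hrdef, show (2:ℝ) = Real.exp (Real.log 2) from (Real.exp_log two_pos).symm,
      ← Real.exp_add]
    exact Real.exp_lt_one_iff.mpr (by linarith)
  have h1r : 0 < 1 - r := by linarith
  refine ⟨2 * (1 - r)⁻¹, by positivity, ?_⟩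
  intro n hn L Ω mΩ P hP X hXm hind hmap
  haveI := hP
  set E : ℕ → ℕ → Set Ω := fun l k =>
    {ω | M * max (Real.sqrt ((n : ℝ) * ((l : ℝ) + L) / 2 ^ l)) ((l : ℝ) + L) <
      |((Finset.univ.filter fun i => X i ω ∈ dyadicI l k).card : ℝ) -
        (n : ℝ) * (μ (dyadicI l k)).toReal|} with hE
  have hEbound : ∀ l k : ℕ, k < 2 ^ l →
      P (E l k) ≤ ENNReal.ofReal (2 * Real.exp (-β * ((l : ℝ) + L))) := by
    intro l k _hk
    by_cases h0 : l = 0 ∧ L = 0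
    · obtain ⟨hl0, hL0⟩ := h0
      subst hl0; subst hL0
      calc P (E 0 k) ≤ 1 := prob_le_one
        _ ≤ ENNReal.ofReal (2 * Real.exp (-β * ((0 : ℕ) + (0:ℕ) : ℝ))) := by
            simp only [Nat.cast_zero, add_zero, mul_zero, Real.exp_zero, mul_one]
            exact ENNReal.one_le_ofReal.mpr one_le_two
    · -- a = l + L ≥ 1
      have ha1 : (1 : ℝ) ≤ (l : ℝ) + L := by
        have : 1 ≤ l + L := by
          rcases Nat.eq_zero_or_pos l with hl | hl
          · rcases Nat.eq_zero_or_pos L with hL | hL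
            · exact absurd ⟨hl, hL⟩ h0
            · omega
          · omega
        calc (1:ℝ) = ((1:ℕ):ℝ) := by norm_num
          _ ≤ ((l + L : ℕ) : ℝ) := Nat.cast_le.mpr this
          _ = (l : ℝ) + L := by push_cast; ring
      set a : ℝ := (l : ℝ) + L
      set q : ℝ := ((2:ℝ) ^ l)⁻¹ with hq
      have hq0 : 0 < q := by positivity
      set t : ℝ := M * max (Real.sqrt ((n : ℝ) * a / 2 ^ l)) a with htdef
      have hsqarg : (n : ℝ) * a / 2 ^ l = (n : ℝ) * a * q := by
        rw [hq, div_eq_mul_inv]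
      have ht : t = M * max (Real.sqrt ((n : ℝ) * a * q)) a := by
        rw [htdef, hsqarg]
      have ht0 : 0 < t := by
        rw [ht]
        have : (0:ℝ) < max (Real.sqrt ((n : ℝ) * a * q)) a :=
          lt_of_lt_of_le (by linarith) (le_max_right _ _)
        positivity
      set V : ℝ := (n : ℝ) * F * q with hV
      have hV0 : 0 < V := by
        have hn1 : (1:ℝ) ≤ (n:ℝ) := by exact_mod_cast hn
        rw [hV]; positivity
      have hVle : (n : ℝ) * (μ (dyadicI l k)).toReal ≤ V := by
        rw [hV, mul_assoc]
        exact mul_le_mul_of_nonneg_left (meas_dyadic_le hF hdens hbound l k) (Nat.cast_nonneg n)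
      have hEeq : E l k = {ω | t < |∑ i : Fin n, (indF (dyadicI l k) (X i ω)
          - (μ (dyadicI l k)).toReal)|} := by
        ext ω
        simp only [hE, Set.mem_setOf_eq, htdef]
        rw [count_eq X (dyadicI l k) ((μ (dyadicI l k)).toReal) ω]
      rw [hEeq]
      calc P {ω | t < |∑ i : Fin n, (indF (dyadicI l k) (X i ω) - (μ (dyadicI l k)).toReal)|}
          ≤ ENNReal.ofReal (2 * Real.exp (-(t ^ 2 / (2 * (V + t / 3))))) :=
            bernstein_tail hXm hind hmap (dyadic_meas l k) hVle hV0 ht0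
        _ ≤ ENNReal.ofReal (2 * Real.exp (-β * a)) := by
            apply ENNReal.ofReal_le_ofReal
            apply mul_le_mul_of_nonneg_left _ (by norm_num)
            rw [Real.exp_le_exp]
            have hn1 : (1:ℝ) ≤ (n:ℝ) := by exact_mod_cast hn
            have := expo_arith hF hM0 hn1 ha1 hq0 ht
            rw [← hβdef] at this
            rw [hV]
            linarith
  -- union bound
  have hsub : {ω | ∃ l k : ℕ, k < 2 ^ l ∧
      M * max (Real.sqrt ((n : ℝ) * ((l : ℝ) + L) / 2 ^ l)) ((l : ℝ) + L) <
        |((Finset.univ.filter fun i => X i ω ∈ dyadicI l k).card : ℝ) -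
          (n : ℝ) * (μ (dyadicI l k)).toReal|}
      ⊆ ⋃ l : ℕ, ⋃ k ∈ Finset.range (2 ^ l), E l k := by
    intro ω hω
    obtain ⟨l, k, hk, hlt⟩ := hω
    exact Set.mem_iUnion.mpr ⟨l, Set.mem_iUnion.mpr ⟨k, Set.mem_iUnion.mpr
      ⟨Finset.mem_range.mpr hk, hlt⟩⟩⟩
  -- geometric series facts
  have hfl : ∀ l : ℕ, (2:ℝ) ^ l * (2 * Real.exp (-β * ((l : ℝ) + L)))
      = (2 * Real.exp (-β * L)) * r ^ l := by
    intro l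
    rw [hrdef, mul_pow, ← Real.exp_nat_mul,
      show -β * ((l : ℝ) + L) = -β * (l:ℝ) + -β * (L:ℝ) by ring, Real.exp_add]
    ring_nf
  have hsummable : Summable (fun l : ℕ => (2:ℝ) ^ l * (2 * Real.exp (-β * ((l : ℝ) + L)))) := by
    apply Summable.congr ((summable_geometric_of_lt_one hr0.le hr1).mul_left
      (2 * Real.exp (-β * L)))
    intro l
    exact (hfl l).symm
  have htsum : ∑' l : ℕ, (2:ℝ) ^ l * (2 * Real.exp (-β * ((l : ℝ) + L)))
      = (2 * Real.exp (-β * L)) * (1 - r)⁻¹ := by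
    rw [tsum_congr hfl, tsum_mul_left, tsum_geometric_of_lt_one hr0.le hr1]
  calc P {ω | ∃ l k : ℕ, k < 2 ^ l ∧
        M * max (Real.sqrt ((n : ℝ) * ((l : ℝ) + L) / 2 ^ l)) ((l : ℝ) + L) <
          |((Finset.univ.filter fun i => X i ω ∈ dyadicI l k).card : ℝ) -
            (n : ℝ) * (μ (dyadicI l k)).toReal|}
      ≤ P (⋃ l : ℕ, ⋃ k ∈ Finset.range (2 ^ l), E l k) := measure_mono hsub
    _ ≤ ∑' l : ℕ, P (⋃ k ∈ Finset.range (2 ^ l), E l k) := measure_iUnion_le _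
    _ ≤ ∑' l : ℕ, ENNReal.ofReal ((2:ℝ) ^ l * (2 * Real.exp (-β * ((l : ℝ) + L)))) := by
        apply ENNReal.tsum_le_tsum
        intro l
        calc P (⋃ k ∈ Finset.range (2 ^ l), E l k)
            ≤ ∑ k ∈ Finset.range (2 ^ l), P (E l k) := measure_biUnion_finset_le _ _
          _ ≤ ∑ _k ∈ Finset.range (2 ^ l),
              ENNReal.ofReal (2 * Real.exp (-β * ((l : ℝ) + L))) :=
            Finset.sum_le_sum fun k hk => hEbound l k (Finset.mem_range.mp hk)
          _ = ENNReal.ofReal ((2:ℝ) ^ l * (2 * Real.exp (-β * ((l : ℝ) + L)))) := by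
            rw [Finset.sum_const, Finset.card_range, nsmul_eq_mul,
              ENNReal.ofReal_mul (by positivity)]
            push_cast
            rw [show ((2:ENNReal)) ^ l = ENNReal.ofReal ((2:ℝ) ^ l) by
                  rw [ENNReal.ofReal_pow (by norm_num)]; norm_num,
              ← ENNReal.ofReal_mul (by norm_num : (0:ℝ) ≤ 2),
              ← ENNReal.ofReal_mul (by positivity)]
    _ = ENNReal.ofReal (∑' l : ℕ, (2:ℝ) ^ l * (2 * Real.exp (-β * ((l : ℝ) + L)))) :=
        (ENNReal.ofReal_tsum_of_nonneg (fun l => by positivity) hsummable).symm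
    _ ≤ ENNReal.ofReal (2 * (1 - r)⁻¹ * 2 ^ (-(L : ℝ))) := by
        apply ENNReal.ofReal_le_ofReal
        rw [htsum]
        have hrp : (2:ℝ) ^ (-(L:ℝ)) = Real.exp (Real.log 2 * (-(L:ℝ))) :=
          Real.rpow_def_of_pos two_pos _
        have hexp : Real.exp (-β * L) ≤ (2:ℝ) ^ (-(L:ℝ)) := by
          rw [hrp, Real.exp_le_exp]
          have : Real.log 2 * (L:ℝ) ≤ β * L :=
            mul_le_mul_of_nonneg_right hβ.le (Nat.cast_nonneg L)
          linarith
        calc 2 * Real.exp (-β * L) * (1 - r)⁻¹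
            = (2 * (1 - r)⁻¹) * Real.exp (-β * L) := by ring
          _ ≤ (2 * (1 - r)⁻¹) * (2:ℝ) ^ (-(L:ℝ)) :=
            mul_le_mul_of_nonneg_left hexp (by positivity)
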